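/- The endomorphism ring of the canonical bristled module C is k: if f₁ : C₁ → C₁ and f₂ : C₂ → C₂ are k-linear maps satisfying f₂ ∘ α_i = α_i ∘ f₁ for all i = 1, …, n, then there exists a scalar μ ∈ k such that f₁ = μ·id_{C₁} and f₂ = μ·id_{C₂}. In particular, C is an indecomposable n-Kronecker module. -/

import Mathlib

/-!
The canonical bristled `n`-Kronecker module `C = (C₁, C₂; α₁, …, α_n)`:
`C₂ = Fin n → k` with standard basis `c_i`, and `C₁ = Sym2 (Fin n) → k` with
standard basis `c_{ij}` indexed by unordered pairs `{i,j}`.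
`α_r` is given by `(α_r x) i = x {i, r}`.
An endomorphism of `C` is a pair of linear maps `(f₁ : C₁ → C₁, f₂ : C₂ → C₂)`
with `f₂ ∘ α_i = α_i ∘ f₁` for all `i`.
`C` is indecomposable means: `C` is nonzero (automatic here) and whenever
`C₁ = U₁ ⊕ W₁` and `C₂ = U₂ ⊕ W₂` with `(U₁, U₂)` and `(W₁, W₂)` submodules
(i.e. `α_i(U₁) ⊆ U₂` and `α_i(W₁) ⊆ W₂` for all `i`), one of the two summands
is zero.
-/

/-- The structure map `α_r : C₁ → C₂` of the canonical bristled module. -/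
def canAlpha (k : Type*) [Field k] (n : ℕ) (r : Fin n) :
    (Sym2 (Fin n) → k) →ₗ[k] (Fin n → k) where
  toFun x i := x (Sym2.mk i r)
  map_add' _ _ := rfl
  map_smul' _ _ := rfl

lemma canAlpha_apply {k : Type*} [Field k] {n : ℕ} (r : Fin n) (x : Sym2 (Fin n) → k)
    (a : Fin n) : canAlpha k n r x a = x s(a, r) := rfl

lemma single_pair_eval₁ {k : Type*} [Field k] {n : ℕ} (i j a : Fin n) :
    (Pi.single (M := fun _ : Sym2 (Fin n) => k) s(i,j) 1) s(a, j)
      = Pi.single (M := fun _ : Fin n => k) i 1 a := by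
  rw [Pi.single_apply, Pi.single_apply]
  congr 1
  simp only [Sym2.eq_iff, eq_iff_iff]
  constructor
  · rintro (⟨h, -⟩ | ⟨rfl, rfl⟩) <;> [exact h; rfl]
  · rintro h; exact Or.inl ⟨h, trivial⟩

lemma single_pair_eval₂ {k : Type*} [Field k] {n : ℕ} (i j a b : Fin n)
    (hbi : b ≠ i) (hbj : b ≠ j) :
    (Pi.single (M := fun _ : Sym2 (Fin n) => k) s(i,j) 1) s(a, b) = 0 := by
  rw [Pi.single_apply, if_neg]
  simp only [Sym2.eq_iff]
  rintro (⟨-, h⟩ | ⟨-, h⟩) <;> [exact hbj h; exact hbi h]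

lemma canBristled_endo_scalar {k : Type*} [Field k] {n : ℕ} (hn : 1 ≤ n)
    (f₁ : (Sym2 (Fin n) → k) →ₗ[k] (Sym2 (Fin n) → k))
    (f₂ : (Fin n → k) →ₗ[k] (Fin n → k))
    (h : ∀ i, f₂ ∘ₗ canAlpha k n i = canAlpha k n i ∘ₗ f₁) :
    ∃ μ : k, f₁ = μ • LinearMap.id ∧ f₂ = μ • LinearMap.id := by
  have hc : ∀ (r : Fin n) (x : Sym2 (Fin n) → k) (a : Fin n),
      f₂ (canAlpha k n r x) a = f₁ x s(a, r) := by
    intro r x a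
    have := congrFun (LinearMap.congr_fun (h r) x) a
    simpa [canAlpha_apply] using this
  -- vanishing of f₁ on basis elements away from the bristles through {i,j}
  have key : ∀ i j a b : Fin n, b ≠ i → b ≠ j →
      f₁ (Pi.single s(i,j) 1) s(a,b) = 0 := by
    intro i j a b hbi hbj
    rw [← hc b]
    have h0 : canAlpha k n b (Pi.single s(i,j) 1) = 0 := by
      funext a'
      rw [canAlpha_apply]
      exact single_pair_eval₂ i j a' b hbi hbj
    rw [h0, map_zero]
    rfl
  have keyJ : ∀ i j a : Fin n, f₁ (Pi.single s(i,j) 1) s(a,j) = f₂ (Pi.single i 1) a := by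
    intro i j a
    rw [← hc j]
    have h1 : canAlpha k n j (Pi.single s(i,j) 1) = Pi.single i 1 := by
      funext a'
      rw [canAlpha_apply]
      exact single_pair_eval₁ i j a'
    rw [h1]
  set μf : Fin n → k := fun i => f₁ (Pi.single s(i,i) 1) s(i,i) with hμf
  have hf2 : ∀ i : Fin n, f₂ (Pi.single i 1) = μf i • Pi.single (M := fun _ : Fin n => k) i 1 := by
    intro i
    funext a
    by_cases hai : a = i
    · subst hai
      rw [← keyJ a a a, Pi.smul_apply, Pi.single_apply, if_pos rfl, smul_eq_mul, mul_one]
    · rw [← keyJ i i a, Pi.smul_apply, Pi.single_apply, if_neg hai, smul_eq_mul, mul_zero,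
        show s(a,i) = s(i,a) from Sym2.eq_swap]
      exact key i i i a hai hai
  have hmu : ∀ i j : Fin n, μf i = μf j := by
    intro i j
    have h1 : f₁ (Pi.single s(i,j) 1) s(i,j) = μf i := by
      rw [keyJ i j i, hf2, Pi.smul_apply, Pi.single_apply, if_pos rfl, smul_eq_mul, mul_one]
    have h2 : f₁ (Pi.single s(i,j) 1) s(i,j) = μf j := by
      have := keyJ j i j
      rw [show s(j,i) = s(i,j) from Sym2.eq_swap] at this
      rw [this, hf2, Pi.smul_apply, Pi.single_apply, if_pos rfl, smul_eq_mul, mul_one]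
    rw [← h1, h2]
  set μ : k := μf ⟨0, hn⟩ with hμ
  have hf1b : ∀ p : Sym2 (Fin n), f₁ (Pi.single p 1) = μ • Pi.single (M := fun _ : Sym2 (Fin n) => k) p 1 := by
    intro p
    induction p using Sym2.ind with
    | _ i j =>
      funext q
      induction q using Sym2.ind with
      | _ a b =>
        by_cases hbj : b = j
        · subst hbj
          rw [keyJ i b a, hf2, Pi.smul_apply, Pi.smul_apply, single_pair_eval₁, hmu i ⟨0, hn⟩]
        · by_cases hbi : b = i
          · subst hbi
            rw [show s(b,j) = s(j,b) from Sym2.eq_swap,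
              keyJ j b a, hf2, Pi.smul_apply, Pi.smul_apply, single_pair_eval₁, hmu j ⟨0, hn⟩]
          · rw [key i j a b hbi hbj, Pi.smul_apply, single_pair_eval₂ i j a b hbi hbj,
              smul_zero]
  refine ⟨μ, ?_, ?_⟩
  · apply LinearMap.pi_ext
    intro p x
    have hx : (Pi.single p x : Sym2 (Fin n) → k) = x • Pi.single (M := fun _ : Sym2 (Fin n) => k) p 1 := by
      funext q
      rw [Pi.smul_apply, Pi.single_apply, Pi.single_apply, smul_eq_mul]
      split <;> simp
    rw [hx, map_smul, map_smul, hf1b]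
    rw [LinearMap.smul_apply, LinearMap.id_apply]
  · apply LinearMap.pi_ext
    intro i x
    have hx : (Pi.single i x : Fin n → k) = x • Pi.single (M := fun _ : Fin n => k) i 1 := by
      funext q
      rw [Pi.smul_apply, Pi.single_apply, Pi.single_apply, smul_eq_mul]
      split <;> simp
    rw [hx, map_smul, map_smul, hf2, hmu i ⟨0, hn⟩]
    rw [LinearMap.smul_apply, LinearMap.id_apply]

/-- The endomorphism ring of the canonical bristled module `C` is `k`:
every endomorphism `(f₁, f₂)` of `C` is a scalar multiple of the identity.
In particular, `C` is an indecomposable `n`-Kronecker module. -/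
theorem endomorphism_ring_of_canonical_bristled_module_is_k
    {k : Type*} [Field k] {n : ℕ} (hn : 1 ≤ n) :
    (∀ (f₁ : (Sym2 (Fin n) → k) →ₗ[k] (Sym2 (Fin n) → k))
        (f₂ : (Fin n → k) →ₗ[k] (Fin n → k)),
      (∀ i, f₂ ∘ₗ canAlpha k n i = canAlpha k n i ∘ₗ f₁) →
      ∃ μ : k, f₁ = μ • LinearMap.id ∧ f₂ = μ • LinearMap.id) ∧
    (∀ (U₁ W₁ : Submodule k (Sym2 (Fin n) → k)) (U₂ W₂ : Submodule k (Fin n → k)),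
      IsCompl U₁ W₁ → IsCompl U₂ W₂ →
      (∀ i, U₁.map (canAlpha k n i) ≤ U₂) →
      (∀ i, W₁.map (canAlpha k n i) ≤ W₂) →
      (U₁ = ⊥ ∧ U₂ = ⊥) ∨ (W₁ = ⊥ ∧ W₂ = ⊥)) := by
  refine ⟨fun f₁ f₂ h => canBristled_endo_scalar hn f₁ f₂ h, ?_⟩
  intro U₁ W₁ U₂ W₂ hc₁ hc₂ hU hW
  set P₁ : (Sym2 (Fin n) → k) →ₗ[k] (Sym2 (Fin n) → k) :=
    U₁.subtype ∘ₗ U₁.projectionOnto W₁ hc₁ with hP₁def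
  set P₂ : (Fin n → k) →ₗ[k] (Fin n → k) :=
    U₂.subtype ∘ₗ U₂.projectionOnto W₂ hc₂ with hP₂def
  have hP₁u : ∀ u ∈ U₁, P₁ u = u := by
    intro u hu
    show (U₁.projectionOnto W₁ hc₁ u : Sym2 (Fin n) → k) = u
    rw [Submodule.linearProjOfIsCompl_apply_left hc₁ ⟨u, hu⟩]
  have hP₁w : ∀ w ∈ W₁, P₁ w = 0 := by
    intro w hw
    show (U₁.projectionOnto W₁ hc₁ w : Sym2 (Fin n) → k) = 0
    rw [Submodule.linearProjOfIsCompl_apply_right hc₁ ⟨w, hw⟩, Submodule.coe_zero]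
  have hP₂u : ∀ u ∈ U₂, P₂ u = u := by
    intro u hu
    show (U₂.projectionOnto W₂ hc₂ u : Fin n → k) = u
    rw [Submodule.linearProjOfIsCompl_apply_left hc₂ ⟨u, hu⟩]
  have hP₂w : ∀ w ∈ W₂, P₂ w = 0 := by
    intro w hw
    show (U₂.projectionOnto W₂ hc₂ w : Fin n → k) = 0
    rw [Submodule.linearProjOfIsCompl_apply_right hc₂ ⟨w, hw⟩, Submodule.coe_zero]
  have hdec : ∀ x : Sym2 (Fin n) → k, ∃ u ∈ U₁, ∃ w ∈ W₁, u + w = x := by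
    intro x
    have hx : x ∈ U₁ ⊔ W₁ := by rw [hc₁.sup_eq_top]; trivial
    exact Submodule.mem_sup.mp hx
  have hcomm : ∀ i, P₂ ∘ₗ canAlpha k n i = canAlpha k n i ∘ₗ P₁ := by
    intro i
    apply LinearMap.ext
    intro x
    obtain ⟨u, hu, w, hw, rfl⟩ := hdec x
    simp only [LinearMap.comp_apply, map_add]
    rw [hP₁u u hu, hP₁w w hw, hP₂u _ (hU i ⟨u, hu, rfl⟩), hP₂w _ (hW i ⟨w, hw, rfl⟩),
      map_zero, add_zero]
  obtain ⟨μ, hμ1, hμ2⟩ := canBristled_endo_scalar hn P₁ P₂ hcomm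
  have hmem : ∀ x, P₁ x ∈ U₁ := fun x => (U₁.projectionOnto W₁ hc₁ x).2
  have hidem : ∀ x, P₁ (P₁ x) = P₁ x := fun x => hP₁u _ (hmem x)
  have h2 : μ * μ = μ := by
    have hX := hidem (Pi.single (M := fun _ : Sym2 (Fin n) => k) s((⟨0,hn⟩ : Fin n), ⟨0,hn⟩) 1)
    rw [hμ1] at hX
    simp only [LinearMap.smul_apply, LinearMap.id_apply, smul_smul] at hX
    have hX2 := congrFun hX s((⟨0,hn⟩ : Fin n), ⟨0,hn⟩)
    simpa [Pi.single_apply] using hX2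
  have hcases : μ = 0 ∨ μ = 1 := by
    rcases mul_eq_zero.mp (show μ * (μ - 1) = 0 by ring_nf; linear_combination h2) with h | h
    · exact Or.inl h
    · exact Or.inr (sub_eq_zero.mp h)
  rcases hcases with h0 | h1
  · left
    constructor
    · rw [Submodule.eq_bot_iff]
      intro u hu
      have := hP₁u u hu
      rw [hμ1, h0] at this
      simpa using this.symm
    · rw [Submodule.eq_bot_iff]
      intro u hu
      have := hP₂u u hu
      rw [hμ2, h0] at this
      simpa using this.symm
  · right
    constructor
    · rw [Submodule.eq_bot_iff]
      intro w hw
      have := hP₁w w hw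
      rw [hμ1, h1] at this
      simpa using this
    · rw [Submodule.eq_bot_iff]
      intro w hw
      have := hP₂w w hw
      rw [hμ2, h1] at this
      simpa using this
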